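/- Let D₁ and D₂ be n×n diagonal real matrices with strictly increasing diagonal entries. Among all orthogonal matrices W, the Frobenius norm ‖D₂ − W D₁ Wᵀ‖_F is minimized exactly when W is diagonal with diagonal entries ±1; in particular there are exactly 2ⁿ minimizers. -/
import Mathlib


open Matrix BigOperators Finset

section FrobAux

variable {n : ℕ}

/-- Extension of a function on `Fin n` to `ℕ` (junk value elsewhere). -/
noncomputable def extFn (a : Fin n → ℝ) : ℕ → ℝ := fun k => if h : k < n then a ⟨k, h⟩ else 0

lemma extFn_coe (a : Fin n → ℝ) (i : Fin n) : extFn a (i : ℕ) = a i := by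
  simp [extFn, i.isLt]

lemma extFn_lt {a : Fin n → ℝ} (ha : StrictMono a) {p q : ℕ} (hpq : p < q) (hq : q < n) :
    extFn a p < extFn a q := by
  have hp : p < n := hpq.trans hq
  have h : a ⟨p, hp⟩ < a ⟨q, hq⟩ := ha (Fin.mk_lt_mk.mpr hpq)
  simpa [extFn, dif_pos hp, dif_pos hq] using h

/-- Dual potential. -/
noncomputable def vFn (a b : Fin n → ℝ) : ℕ → ℝ :=
  fun j => ∑ k ∈ Finset.range j, (extFn a k + extFn a (k + 1)) / 2 * (extFn b (k + 1) - extFn b k)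

/-- Slack of the dual feasibility constraint. -/
noncomputable def cFn (a b : Fin n → ℝ) : Fin n → Fin n → ℝ :=
  fun i j => a i * b i - vFn a b i + vFn a b j - a i * b j

lemma cFn_diag (a b : Fin n → ℝ) (i : Fin n) : cFn a b i i = 0 := by
  unfold cFn; ring

lemma cFn_pos {a b : Fin n → ℝ} (ha : StrictMono a) (hb : StrictMono b)
    {i j : Fin n} (hij : i ≠ j) : 0 < cFn a b i j := by
  set A := extFn a with hA
  set B := extFn b with hB
  have key : A i * (B j - B i) < vFn a b j - vFn a b i := by
    have hvdiff : ∀ p q : ℕ, p ≤ q →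
        vFn a b q - vFn a b p = ∑ k ∈ Finset.Ico p q, (A k + A (k + 1)) / 2 * (B (k + 1) - B k) := by
      intro p q hpq
      rw [Finset.sum_Ico_eq_sub _ hpq]
      rfl
    have htel : ∀ p q : ℕ, p ≤ q → ∑ k ∈ Finset.Ico p q, (B (k + 1) - B k) = B q - B p := by
      intro p q hpq
      rw [Finset.sum_Ico_eq_sub _ hpq, Finset.sum_range_sub, Finset.sum_range_sub]
      ring
    rcases lt_or_gt_of_ne (fun h => hij (Fin.val_injective h)) with hlt | hlt
    · -- (i : ℕ) < j
      rw [hvdiff _ _ hlt.le]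
      have : A ↑i * (B ↑j - B ↑i) = ∑ k ∈ Finset.Ico (i : ℕ) (j : ℕ), A ↑i * (B (k + 1) - B k) := by
        rw [← Finset.mul_sum, htel _ _ hlt.le]
      rw [this]
      refine Finset.sum_lt_sum_of_nonempty (by simpa using hlt) ?_
      intro k hk
      rw [Finset.mem_Ico] at hk
      have hk1 : k + 1 < n := by have := j.isLt; omega
      have hBpos : 0 < B (k + 1) - B k := sub_pos.mpr (extFn_lt hb (Nat.lt_succ_self k) hk1)
      have h3 : A ↑i ≤ A k := by
        rcases eq_or_lt_of_le hk.1 with h | h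
        · rw [h]
        · exact (extFn_lt ha h (by omega)).le
      have h4 : A ↑i < A (k + 1) := extFn_lt ha (by omega) hk1
      have : A ↑i < (A k + A (k + 1)) / 2 := by linarith
      exact mul_lt_mul_of_pos_right this hBpos
    · -- (j : ℕ) < i
      have h5 : vFn a b ↑i - vFn a b ↑j < A ↑i * (B ↑i - B ↑j) := by
        rw [hvdiff _ _ hlt.le]
        have : A ↑i * (B ↑i - B ↑j) = ∑ k ∈ Finset.Ico (j : ℕ) (i : ℕ), A ↑i * (B (k + 1) - B k) := by
          rw [← Finset.mul_sum, htel _ _ hlt.le]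
        rw [this]
        refine Finset.sum_lt_sum_of_nonempty (by simpa using hlt) ?_
        intro k hk
        rw [Finset.mem_Ico] at hk
        have hk1 : k + 1 < n := by have := i.isLt; omega
        have hBpos : 0 < B (k + 1) - B k := sub_pos.mpr (extFn_lt hb (Nat.lt_succ_self k) hk1)
        have h3 : A k < A ↑i := extFn_lt ha hk.2 i.isLt
        have h4 : A (k + 1) ≤ A ↑i := by
          rcases eq_or_lt_of_le (show k + 1 ≤ (i : ℕ) from hk.2) with h | h
          · rw [h]
          · exact (extFn_lt ha h i.isLt).le
        have : (A k + A (k + 1)) / 2 < A ↑i := by linarith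
        exact mul_lt_mul_of_pos_right this hBpos
      linarith
  have hai : A ↑i = a i := extFn_coe a i
  have hbi : B ↑i = b i := extFn_coe b i
  have hbj : B ↑j = b j := extFn_coe b j
  rw [hai, hbi, hbj] at key
  unfold cFn
  linarith

/-- The quantity to maximize. -/
noncomputable def Gfun (a b : Fin n → ℝ) (V : Matrix (Fin n) (Fin n) ℝ) : ℝ :=
  ∑ i, ∑ j, a i * b j * (V i j) ^ 2

lemma row_sq_sum {V : Matrix (Fin n) (Fin n) ℝ} (hV : V * Vᵀ = 1) (i : Fin n) :
    ∑ k, (V i k) ^ 2 = 1 := by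
  have h := congrFun (congrFun hV i) i
  simpa [Matrix.mul_apply, Matrix.transpose_apply, Matrix.one_apply, sq] using h

lemma col_sq_sum {V : Matrix (Fin n) (Fin n) ℝ} (hV : V * Vᵀ = 1) (j : Fin n) :
    ∑ k, (V k j) ^ 2 = 1 := by
  have hV' : Vᵀ * V = 1 := mul_eq_one_comm.mp hV
  have h := congrFun (congrFun hV' j) j
  simpa [Matrix.mul_apply, Matrix.transpose_apply, Matrix.one_apply, sq] using h

lemma slack_identity (a b : Fin n → ℝ) {V : Matrix (Fin n) (Fin n) ℝ} (hV : V * Vᵀ = 1) :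
    ∑ i, ∑ j, (V i j) ^ 2 * cFn a b i j = (∑ i, a i * b i) - Gfun a b V := by
  have e1 : ∀ i j : Fin n, (V i j) ^ 2 * cFn a b i j =
      (a i * b i - vFn a b (i : ℕ)) * (V i j) ^ 2 + vFn a b (j : ℕ) * (V i j) ^ 2
        - a i * b j * (V i j) ^ 2 := by
    intro i j; unfold cFn; ring
  simp only [e1, Finset.sum_add_distrib, Finset.sum_sub_distrib]
  have t1 : ∑ i, ∑ j, (a i * b i - vFn a b ↑i) * (V i j) ^ 2
      = ∑ i : Fin n, (a i * b i - vFn a b ↑i) := by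
    refine Finset.sum_congr rfl fun i _ => ?_
    rw [← Finset.mul_sum, row_sq_sum hV i, mul_one]
  have t2 : ∑ i : Fin n, ∑ j : Fin n, vFn a b ↑j * (V i j) ^ 2 = ∑ j : Fin n, vFn a b ↑j := by
    rw [Finset.sum_comm]
    refine Finset.sum_congr rfl fun j _ => ?_
    rw [← Finset.mul_sum, col_sq_sum hV j, mul_one]
  rw [t1, t2]
  unfold Gfun
  rw [Finset.sum_sub_distrib]
  ring

lemma Gfun_le {a b : Fin n → ℝ} (ha : StrictMono a) (hb : StrictMono b)
    {V : Matrix (Fin n) (Fin n) ℝ} (hV : V * Vᵀ = 1) :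
    Gfun a b V ≤ ∑ i, a i * b i := by
  have h := slack_identity a b hV
  have hnn : 0 ≤ ∑ i, ∑ j, (V i j) ^ 2 * cFn a b i j := by
    refine Finset.sum_nonneg fun i _ => Finset.sum_nonneg fun j _ => ?_
    rcases eq_or_ne i j with rfl | hij
    · rw [cFn_diag]; ring_nf; exact le_refl 0
    · exact mul_nonneg (sq_nonneg _) (cFn_pos ha hb hij).le
  linarith

lemma Gfun_eq_iff {a b : Fin n → ℝ} (ha : StrictMono a) (hb : StrictMono b)
    {V : Matrix (Fin n) (Fin n) ℝ} (hV : V * Vᵀ = 1) :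
    Gfun a b V = ∑ i, a i * b i ↔ ∀ i j, i ≠ j → V i j = 0 := by
  constructor
  · intro heq
    have h := slack_identity a b hV
    have hz : ∑ i, ∑ j, (V i j) ^ 2 * cFn a b i j = 0 := by rw [h, heq]; ring
    intro i j hij
    have hnn : ∀ p ∈ Finset.univ, ∀ q ∈ Finset.univ, 0 ≤ (V p q) ^ 2 * cFn a b p q := by
      intro p _ q _
      rcases eq_or_ne p q with rfl | hpq
      · rw [cFn_diag]; ring_nf; exact le_refl 0
      · exact mul_nonneg (sq_nonneg _) (cFn_pos ha hb hpq).le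
    have hterm : (V i j) ^ 2 * cFn a b i j = 0 := by
      have houter := (Finset.sum_eq_zero_iff_of_nonneg
        (fun p _ => Finset.sum_nonneg fun q hq => hnn p (Finset.mem_univ p) q hq)).mp hz
        i (Finset.mem_univ i)
      exact (Finset.sum_eq_zero_iff_of_nonneg (fun q hq => hnn i (Finset.mem_univ i) q hq)).mp
        houter j (Finset.mem_univ j)
    have hc := cFn_pos ha hb hij
    have : (V i j) ^ 2 = 0 := by
      by_contra hne
      exact hne (by
        rcases mul_eq_zero.mp hterm with h' | h'
        · exact h'
        · exact absurd h' hc.ne')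
    exact pow_eq_zero_iff (by norm_num) |>.mp this
  · intro hoff
    have hdiag : ∀ i : Fin n, (V i i) ^ 2 = 1 := by
      intro i
      have h := row_sq_sum hV i
      rwa [Finset.sum_eq_single i (fun k _ hk => by rw [hoff i k (Ne.symm hk)]; ring)
        (fun h => absurd (Finset.mem_univ i) h)] at h
    unfold Gfun
    refine Finset.sum_congr rfl fun i _ => ?_
    rw [Finset.sum_eq_single i (fun k _ hk => by rw [hoff i k (Ne.symm hk)]; ring)
      (fun h => absurd (Finset.mem_univ i) h), hdiag i, mul_one]

/-- The Frobenius objective. -/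
noncomputable def Ffun (a b : Fin n → ℝ) (V : Matrix (Fin n) (Fin n) ℝ) : ℝ :=
  ∑ i, ∑ j, ((Matrix.diagonal a - V * Matrix.diagonal b * Vᵀ) i j) ^ 2

lemma Ffun_decomp (a b : Fin n → ℝ) {V : Matrix (Fin n) (Fin n) ℝ} (hV : V * Vᵀ = 1) :
    Ffun a b V = (∑ i, (a i) ^ 2) + (∑ i, (b i) ^ 2) - 2 * Gfun a b V := by
  have hV' : Vᵀ * V = 1 := mul_eq_one_comm.mp hV
  set M := V * Matrix.diagonal b * Vᵀ with hM
  have hMapp : ∀ i j, M i j = ∑ k, V i k * b k * V j k := by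
    intro i j
    rw [hM, Matrix.mul_apply]
    refine Finset.sum_congr rfl fun k _ => ?_
    rw [Matrix.mul_diagonal, Matrix.transpose_apply]
  -- (ii) sum of squares of diagonal a
  have hii : ∑ i, ∑ j, ((Matrix.diagonal a) i j) ^ 2 = ∑ i, (a i) ^ 2 := by
    refine Finset.sum_congr rfl fun i _ => ?_
    rw [Finset.sum_eq_single i (fun k _ hk => by
        rw [Matrix.diagonal_apply_ne' a hk]; ring)
      (fun h => absurd (Finset.mem_univ i) h), Matrix.diagonal_apply_eq]
  -- (iii) cross term
  have hiii : ∑ i, ∑ j, (Matrix.diagonal a) i j * M i j = Gfun a b V := by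
    have : ∀ i, ∑ j, (Matrix.diagonal a) i j * M i j = a i * M i i := by
      intro i
      rw [Finset.sum_eq_single i (fun k _ hk => by
          rw [Matrix.diagonal_apply_ne' a hk]; ring)
        (fun h => absurd (Finset.mem_univ i) h), Matrix.diagonal_apply_eq]
    simp only [this]
    unfold Gfun
    refine Finset.sum_congr rfl fun i _ => ?_
    rw [hMapp, Finset.mul_sum]
    refine Finset.sum_congr rfl fun k _ => ?_
    ring
  -- (iv) sum of squares of M
  have hMMt : M * Mᵀ = V * Matrix.diagonal (fun i => b i * b i) * Vᵀ := by
    have hMt : Mᵀ = V * Matrix.diagonal b * Vᵀ := by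
      rw [hM, Matrix.transpose_mul, Matrix.transpose_mul, Matrix.transpose_transpose,
        Matrix.diagonal_transpose, Matrix.mul_assoc]
    rw [hMt, hM]
    have : V * Matrix.diagonal b * Vᵀ * (V * Matrix.diagonal b * Vᵀ)
        = V * Matrix.diagonal b * (Vᵀ * V) * Matrix.diagonal b * Vᵀ := by
      simp only [Matrix.mul_assoc]
    rw [this, hV', Matrix.mul_one,
      Matrix.mul_assoc V (Matrix.diagonal b) (Matrix.diagonal b),
      Matrix.diagonal_mul_diagonal]
  have hiv : ∑ i, ∑ j, (M i j) ^ 2 = ∑ i, (b i) ^ 2 := by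
    have h1 : ∑ i, ∑ j, (M i j) ^ 2 = Matrix.trace (M * Mᵀ) := by
      simp [Matrix.trace, Matrix.diag, Matrix.mul_apply, Matrix.transpose_apply, sq]
    rw [h1, hMMt, Matrix.trace_mul_comm (V * Matrix.diagonal (fun i => b i * b i)) Vᵀ,
      ← Matrix.mul_assoc, hV', Matrix.one_mul, Matrix.trace_diagonal]
    refine Finset.sum_congr rfl fun i _ => (sq (b i)).symm
  -- assemble
  have hsplit : Ffun a b V = (∑ i, ∑ j, ((Matrix.diagonal a) i j) ^ 2)
      - 2 * (∑ i, ∑ j, (Matrix.diagonal a) i j * M i j) + ∑ i, ∑ j, (M i j) ^ 2 := by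
    unfold Ffun
    have e : ∀ i j : Fin n, ((Matrix.diagonal a - M) i j) ^ 2
        = ((Matrix.diagonal a) i j) ^ 2 - 2 * ((Matrix.diagonal a) i j * M i j)
          + (M i j) ^ 2 := by
      intro i j; rw [Matrix.sub_apply]; ring
    simp only [← hM, e, Finset.sum_add_distrib, Finset.sum_sub_distrib, ← Finset.mul_sum]
  rw [hsplit, hii, hiii, hiv]
  ring

lemma one_orth : (1 : Matrix (Fin n) (Fin n) ℝ) * (1 : Matrix (Fin n) (Fin n) ℝ)ᵀ = 1 := by
  rw [Matrix.transpose_one, Matrix.one_mul]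

lemma Gfun_one (a b : Fin n → ℝ) : Gfun a b (1 : Matrix (Fin n) (Fin n) ℝ) = ∑ i, a i * b i := by
  unfold Gfun
  refine Finset.sum_congr rfl fun i _ => ?_
  rw [Finset.sum_eq_single i (fun k _ hk => by
      rw [Matrix.one_apply_ne' hk]; ring)
    (fun h => absurd (Finset.mem_univ i) h), Matrix.one_apply_eq]
  ring

/-- Main characterization of minimizers. -/
lemma min_iff_sign_diag {a b : Fin n → ℝ} (ha : StrictMono a) (hb : StrictMono b)
    {W : Matrix (Fin n) (Fin n) ℝ} (hW : W * Wᵀ = 1) :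
    (∀ V : Matrix (Fin n) (Fin n) ℝ, V * Vᵀ = 1 → Ffun a b W ≤ Ffun a b V) ↔
      ((∀ i j, i ≠ j → W i j = 0) ∧ ∀ i, W i i = 1 ∨ W i i = -1) := by
  constructor
  · intro hmin
    have h1 := hmin 1 one_orth
    rw [Ffun_decomp a b hW, Ffun_decomp a b one_orth, Gfun_one] at h1
    have hge : ∑ i, a i * b i ≤ Gfun a b W := by linarith
    have heq : Gfun a b W = ∑ i, a i * b i := le_antisymm (Gfun_le ha hb hW) hge
    have hoff := (Gfun_eq_iff ha hb hW).mp heq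
    refine ⟨hoff, fun i => ?_⟩
    have h := row_sq_sum hW i
    rw [Finset.sum_eq_single i (fun k _ hk => by rw [hoff i k (Ne.symm hk)]; ring)
      (fun h => absurd (Finset.mem_univ i) h)] at h
    rw [sq] at h
    exact mul_self_eq_one_iff.mp h
  · rintro ⟨hoff, _⟩
    intro V hV
    have heq : Gfun a b W = ∑ i, a i * b i := (Gfun_eq_iff ha hb hW).mpr hoff
    rw [Ffun_decomp a b hW, Ffun_decomp a b hV, heq]
    have := Gfun_le ha hb hV
    linarith

end FrobAux

theorem frobenius_min_orthogonal_iff_sign_diagonal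
    (n : ℕ) (d₁ d₂ : Fin n → ℝ) (h₁ : StrictMono d₁) (h₂ : StrictMono d₂)
    (W : Matrix (Fin n) (Fin n) ℝ) (hW : W * Wᵀ = 1) :
    ((∀ V : Matrix (Fin n) (Fin n) ℝ, V * Vᵀ = 1 →
        (∑ i, ∑ j, ((Matrix.diagonal d₂ - W * Matrix.diagonal d₁ * Wᵀ) i j) ^ 2) ≤
        (∑ i, ∑ j, ((Matrix.diagonal d₂ - V * Matrix.diagonal d₁ * Vᵀ) i j) ^ 2)) ↔
      ((∀ i j, i ≠ j → W i j = 0) ∧ ∀ i, W i i = 1 ∨ W i i = -1)) ∧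
    Set.ncard {V : Matrix (Fin n) (Fin n) ℝ | V * Vᵀ = 1 ∧
        ∀ U : Matrix (Fin n) (Fin n) ℝ, U * Uᵀ = 1 →
          (∑ i, ∑ j, ((Matrix.diagonal d₂ - V * Matrix.diagonal d₁ * Vᵀ) i j) ^ 2) ≤
          (∑ i, ∑ j, ((Matrix.diagonal d₂ - U * Matrix.diagonal d₁ * Uᵀ) i j) ^ 2)}
      = 2 ^ n := by
  classical
  constructor
  · exact min_iff_sign_diag h₂ h₁ hW
  · set S : Set (Matrix (Fin n) (Fin n) ℝ) := {V | V * Vᵀ = 1 ∧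
        ∀ U : Matrix (Fin n) (Fin n) ℝ, U * Uᵀ = 1 →
          (∑ i, ∑ j, ((Matrix.diagonal d₂ - V * Matrix.diagonal d₁ * Vᵀ) i j) ^ 2) ≤
          (∑ i, ∑ j, ((Matrix.diagonal d₂ - U * Matrix.diagonal d₁ * Uᵀ) i j) ^ 2)} with hS
    have hmem : ∀ V : Matrix (Fin n) (Fin n) ℝ,
        V ∈ S ↔ ((∀ i j, i ≠ j → V i j = 0) ∧ ∀ i, V i i = 1 ∨ V i i = -1) := by
      intro V
      constructor
      · rintro ⟨hV, hminV⟩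
        exact (min_iff_sign_diag h₂ h₁ hV).mp hminV
      · rintro ⟨hoff, hdiag⟩
        have horth : V * Vᵀ = 1 := by
          ext i j
          rw [Matrix.mul_apply, Matrix.one_apply]
          rcases eq_or_ne i j with rfl | hij
          · rw [if_pos rfl, Finset.sum_eq_single i (fun k _ hk => by
              rw [Matrix.transpose_apply, hoff i k (Ne.symm hk)]; ring)
              (fun h => absurd (Finset.mem_univ i) h)]
            rw [Matrix.transpose_apply]
            rcases hdiag i with h | h <;> rw [h] <;> norm_num
          · rw [if_neg hij]
            refine Finset.sum_eq_zero fun k _ => ?_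
            rcases eq_or_ne k i with rfl | hki
            · rw [Matrix.transpose_apply, hoff j k (Ne.symm hij)]; ring
            · rw [hoff i k (Ne.symm hki)]; ring
        exact ⟨horth, (min_iff_sign_diag h₂ h₁ horth).mpr ⟨hoff, hdiag⟩⟩
    set f : (Fin n → Bool) → Matrix (Fin n) (Fin n) ℝ :=
      fun ε => Matrix.diagonal (fun i => if ε i then 1 else -1) with hf
    have hSeq : S = Set.range f := by
      ext V
      rw [hmem V]
      constructor
      · rintro ⟨hoff, hdiag⟩
        refine ⟨fun i => if V i i = 1 then true else false, ?_⟩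
        ext i j
        rcases eq_or_ne i j with rfl | hij
        · rw [hf]
          simp only [Matrix.diagonal_apply_eq]
          rcases hdiag i with h | h
          · simp [h]
          · rw [if_neg (by norm_num [h] :
              ¬((if V i i = 1 then true else false) = true)), h]

        · rw [hf]
          simp only [Matrix.diagonal_apply_ne _ hij]
          exact (hoff i j hij).symm
      · rintro ⟨ε, rfl⟩
        refine ⟨fun i j hij => Matrix.diagonal_apply_ne _ hij, fun i => ?_⟩
        rw [hf]
        simp only [Matrix.diagonal_apply_eq]
        cases ε i <;> simp
    have hinj : Function.Injective f := by
      intro ε ε' h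
      funext i
      have h2 := congrFun (congrFun h i) i
      rw [hf] at h2
      simp only [Matrix.diagonal_apply_eq] at h2
      cases hε : ε i <;> cases hε' : ε' i <;> rw [hε, hε'] at h2 <;> norm_num at h2 <;> rfl
    rw [hSeq, ← Set.image_univ, Set.ncard_image_of_injective _ hinj, Set.ncard_univ,
      Nat.card_eq_fintype_card]
    simp
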